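/- For every nonnegative integer k, 8 divides 4^k * k * (k-1), and Σ_{j=0}^k binom(2j,j)*binom(2k-2j,k-j)*(36 j (k-j)) = (9/2) * 4^k * k * (k-1) as integers (i.e., 2·LHS = 9·4^k·k·(k-1)). -/

import Mathlib

open Finset Nat

private def cb (n : ℕ) : ℕ := Nat.centralBinom n

private def S0 (k : ℕ) : ℕ := ∑ j ∈ range (k+1), cb j * cb (k - j)
private def S1 (k : ℕ) : ℕ := ∑ j ∈ range (k+1), j * cb j * cb (k - j)
private def S2 (k : ℕ) : ℕ := ∑ j ∈ range (k+1), j * (k - j) * cb j * cb (k - j)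

private lemma cb_succ (n : ℕ) : (n+1) * cb (n+1) = (4*n+2) * cb n := by
  unfold cb
  rw [Nat.succ_mul_centralBinom_succ]
  ring

private lemma refl1 (k : ℕ) :
    ∑ j ∈ range (k+1), (k - j) * cb j * cb (k - j) = S1 k := by
  unfold S1
  rw [← Finset.sum_range_reflect (fun j => j * cb j * cb (k - j)) (k+1)]
  apply Finset.sum_congr rfl
  intro j hj
  rw [Finset.mem_range] at hj
  have h2 : k - (k - j) = j := by omega
  simp only [Nat.add_sub_cancel, h2]
  ring

private lemma S1_succ (k : ℕ) : S1 (k+1) = 4 * S1 k + 2 * S0 k := by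
  unfold S1
  rw [Finset.sum_range_succ']
  simp only [Nat.zero_mul, add_zero]
  have h : ∀ i, (i+1) * cb (i+1) * cb (k + 1 - (i+1)) = (4*i+2) * (cb i * cb (k - i)) := by
    intro i
    have hk : k + 1 - (i+1) = k - i := by omega
    rw [hk, cb_succ, mul_assoc]
  rw [Finset.sum_congr rfl fun i _ => h i]
  unfold S0
  rw [Finset.mul_sum, Finset.mul_sum, ← Finset.sum_add_distrib]
  apply Finset.sum_congr rfl
  intro j _
  ring

private lemma S2_succ (k : ℕ) : S2 (k+1) = 4 * S2 k + 2 * S1 k := by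
  unfold S2
  rw [Finset.sum_range_succ']
  simp only [Nat.zero_mul, add_zero]
  have h : ∀ i, (i+1) * (k + 1 - (i+1)) * cb (i+1) * cb (k + 1 - (i+1))
      = 4 * (i * (k - i) * cb i * cb (k - i)) + 2 * ((k - i) * cb i * cb (k - i)) := by
    intro i
    have hk : k + 1 - (i+1) = k - i := by omega
    rw [hk]
    have h1 : (i+1) * (k - i) * cb (i+1) * cb (k - i)
        = (k - i) * ((i+1) * cb (i+1)) * cb (k - i) := by ring
    rw [h1, cb_succ]
    ring
  rw [Finset.sum_congr rfl fun i _ => h i, Finset.sum_add_distrib, ← Finset.mul_sum,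
    ← Finset.mul_sum, refl1]

private lemma S0_succ (k : ℕ) (h1 : S1 (k+1) = 4 * S1 k + 2 * S0 k) :
    (k+1) * S0 (k+1) = 2 * S1 (k+1) := by
  unfold S0
  rw [Finset.mul_sum]
  have h : ∀ j ∈ range (k+2), (k+1) * (cb j * cb (k + 1 - j))
      = j * cb j * cb (k+1-j) + (k+1-j) * cb j * cb (k+1-j) := by
    intro j hj
    rw [Finset.mem_range] at hj
    have hjk : j + (k+1-j) = k+1 := by omega
    calc (k+1) * (cb j * cb (k+1-j)) = (j + (k+1-j)) * (cb j * cb (k+1-j)) := by rw [hjk]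
      _ = j * cb j * cb (k+1-j) + (k+1-j) * cb j * cb (k+1-j) := by ring
  rw [Finset.sum_congr rfl h, Finset.sum_add_distrib, refl1 (k+1)]
  unfold S1
  ring

private lemma key : ∀ k, S0 k = 4 ^ k ∧ 2 * S1 k = k * 4 ^ k ∧ 8 * S2 k = 4 ^ k * k * (k - 1) := by
  intro k
  induction k with
  | zero => simp [S0, S1, S2, cb]
  | succ k ih =>
    obtain ⟨h0, h1, h2⟩ := ih
    have hs1 : 2 * S1 (k+1) = (k+1) * 4 ^ (k+1) := by
      rw [S1_succ]
      have : 2 * (4 * S1 k + 2 * S0 k) = 4 * (2 * S1 k) + 4 * S0 k := by ring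
      rw [this, h1, h0]
      ring
    refine ⟨?_, hs1, ?_⟩
    · have := S0_succ k (S1_succ k)
      have h' : (k+1) * S0 (k+1) = (k+1) * 4 ^ (k+1) := by rw [this, hs1]
      exact Nat.eq_of_mul_eq_mul_left (by omega) h'
    · rw [S2_succ]
      have : 8 * (4 * S2 k + 2 * S1 k) = 4 * (8 * S2 k) + 8 * (2 * S1 k) := by ring
      rw [this, h2, h1]
      have hk : k * (k - 1) + 2 * k = (k + 1) * k := by
        rcases k with _ | m
        · simp
        · show (m+1) * m + 2 * (m+1) = (m+1+1) * (m+1)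
          ring
      show 4 * (4 ^ k * k * (k-1)) + 8 * (k * 4 ^ k) = 4 ^ (k+1) * (k+1) * k
      calc 4 * (4 ^ k * k * (k-1)) + 8 * (k * 4 ^ k)
          = 4 ^ (k+1) * (k * (k-1) + 2 * k) := by ring
        _ = 4 ^ (k+1) * ((k+1) * k) := by rw [hk]
        _ = 4 ^ (k+1) * (k+1) * k := by ring

theorem stmt_17 (k : ℕ) :
    8 ∣ 4 ^ k * k * (k - 1) ∧
    2 * ∑ j ∈ Finset.range (k + 1),
        (2 * j).choose j * (2 * (k - j)).choose (k - j) * (36 * j * (k - j))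
      = 9 * (4 ^ k * k * (k - 1)) := by
  obtain ⟨h0, h1, h2⟩ := key k
  have hsum : ∑ j ∈ Finset.range (k + 1),
      (2 * j).choose j * (2 * (k - j)).choose (k - j) * (36 * j * (k - j)) = 36 * S2 k := by
    unfold S2
    rw [Finset.mul_sum]
    apply Finset.sum_congr rfl
    intro j _
    unfold cb Nat.centralBinom
    ring
  constructor
  · exact ⟨S2 k, h2.symm⟩
  · rw [hsum, ← h2]
    ring
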